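/- arXiv:1506.06275 — 3 statements merged into one kernel-verified Lean document; each statement's English description precedes it below -/
import Mathlib

section
/- Serializability supports early release: there exists a serializable history H (with unique writes) and a transaction T_i in H such that T_i releases some variable early in H. -/
/-!
Formal model of transactional memory (TM) histories, following Siek &
Wojciechowski, "Last-use Opacity: A Strong Safety Property for Transactional
Memory with Early Release Support".

Transactions and shared variables are indexed by natural numbers; values of
variables are natural numbers with initial value 0.
-/

namespace TM

open Classical

/-- Transactional operations: `init`, read of a variable, write of a value to
a variable, `tryCommit` and `tryAbort`. -/
inductive Op : Type
  | init : Op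
  | read : ℕ → Op
  | write : ℕ → ℕ → Op
  | tryCommit : Op
  | tryAbort : Op
  deriving DecidableEq

/-- Responses: `ok`, a value (for reads), commit `C_i`, abort `A_i`. -/
inductive Resp : Type
  | ok : Resp
  | value : ℕ → Resp
  | committed : Resp
  | aborted : Resp
  deriving DecidableEq

/-- Invocation and response events, tagged with the transaction executing them. -/
inductive Event : Type
  | inv : ℕ → Op → Event
  | res : ℕ → Resp → Event
  deriving DecidableEq

/-- The transaction executing an event. -/
def Event.txn : Event → ℕ
  | .inv t _ => t
  | .res t _ => t

/-- A history is a finite sequence of events. -/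
abbrev History := List Event

/-- `proj i H` is `H|T_i`, the subsequence of events of transaction `i`. -/
def proj (i : ℕ) (H : History) : History :=
  H.filter (fun e => e.txn == i)

/-- Transaction `i` is in `H` (`H|T_i ≠ ∅`). -/
def inTxn (H : History) (i : ℕ) : Prop := proj i H ≠ []

/-- `T_i` is committed in `H`: `H|T_i` contains `tryC_i → C_i`. -/
def committed (H : History) (i : ℕ) : Prop :=
  List.Sublist [Event.inv i Op.tryCommit, Event.res i Resp.committed] (proj i H)

/-- `T_i` is aborted in `H`: `H|T_i` contains a response `A_i`. -/
def aborted (H : History) (i : ℕ) : Prop :=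
  Event.res i Resp.aborted ∈ proj i H

/-- `T_i` is commit-pending in `H`. -/
def commitPending (H : History) (i : ℕ) : Prop :=
  Event.inv i Op.tryCommit ∈ proj i H ∧
    Event.res i Resp.committed ∉ proj i H ∧ Event.res i Resp.aborted ∉ proj i H

/-- `T_i` is live in `H`. -/
def live (H : History) (i : ℕ) : Prop :=
  inTxn H i ∧ ¬ committed H i ∧ ¬ aborted H i ∧ ¬ commitPending H i

/-- A complete operation execution by transaction `i` in `H`: the invocation
is at position `ki`, its matching response at position `kr` (no events of `i`
in between). -/
def opExec (H : History) (i ki kr : ℕ) (o : Op) (r : Resp) : Prop :=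
  ki < kr ∧ H[ki]? = some (Event.inv i o) ∧ H[kr]? = some (Event.res i r) ∧
    ∀ (m : ℕ) (e : Event), ki < m → m < kr → H[m]? = some e → e.txn ≠ i

def isInvEvent : Event → Prop
  | .inv _ _ => True
  | .res _ _ => False

def isResEvent : Event → Prop
  | .inv _ _ => False
  | .res _ _ => True

/-- Well-formedness of `H|T_i` (as the list `L`): alternation of invocations
and responses starting with `init_i`, no events after a commit/abort response,
and no invocation after an invocation of `tryC_i` or `tryA_i`. -/
def wellFormedTxn (L : History) (i : ℕ) : Prop :=
  (∀ (k : ℕ) (e : Event), L[k]? = some e →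
      ((k % 2 = 0 → isInvEvent e) ∧ (k % 2 = 1 → isResEvent e))) ∧
  (L ≠ [] → L[0]? = some (Event.inv i Op.init)) ∧
  (∀ k : ℕ, (L[k]? = some (Event.res i Resp.committed) ∨
      L[k]? = some (Event.res i Resp.aborted)) → L.length = k + 1) ∧
  (∀ (k : ℕ) (o : Op), L[k]? = some (Event.inv i o) → (o = Op.tryCommit ∨ o = Op.tryAbort) →
      ∀ (m : ℕ) (o' : Op), L[m]? = some (Event.inv i o') → m ≤ k)

/-- A well-formed history. -/
def wellFormed (H : History) : Prop :=
  ∀ i : ℕ, wellFormedTxn (proj i H) i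

/-- Unique writes: distinct write executions write distinct values, all
different from the initial value 0. -/
def uniqueWrites (H : History) : Prop :=
  ∀ (k1 k2 i1 i2 x1 x2 v1 v2 : ℕ),
    H[k1]? = some (Event.inv i1 (Op.write x1 v1)) →
    H[k2]? = some (Event.inv i2 (Op.write x2 v2)) →
    v1 ≠ 0 ∧ (k1 ≠ k2 → v1 ≠ v2)

/-- Two histories are equivalent if they agree on every `H|T_i`. -/
def equivH (H1 H2 : History) : Prop := ∀ i : ℕ, proj i H1 = proj i H2

/-- Real-time precedence: the last event of `H|T_i` precedes the first event
of `H|T_j` in `H`. -/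
def rtPrec (H : History) (i j : ℕ) : Prop :=
  ∃ k l : ℕ, k < l ∧
    (∃ e : Event, H[k]? = some e ∧ e.txn = i) ∧
    (∃ e : Event, H[l]? = some e ∧ e.txn = j) ∧
    (∀ (m : ℕ) (e : Event), H[m]? = some e → e.txn = i → m ≤ k) ∧
    (∀ (m : ℕ) (e : Event), H[m]? = some e → e.txn = j → l ≤ m)

/-- `S` preserves the real-time order of `H`. -/
def preservesRT (H S : History) : Prop := ∀ i j : ℕ, rtPrec H i j → rtPrec S i j

/-- A sequential history: any two distinct transactions are comparable in the
real-time order. -/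
def sequential (S : History) : Prop :=
  ∀ i j : ℕ, inTxn S i → inTxn S j → i ≠ j → rtPrec S i j ∨ rtPrec S j i

/-- The read of value `v` on variable `x` invoked at position `ki` is
consistent with the sequential specification of `x`: the latest write to `x`
completed before it writes `v`, or there is no such write and `v = 0`. -/
def readsLegally (S : History) (x v ki : ℕ) : Prop :=
  (∃ j kwi kwr : ℕ, kwr < ki ∧ opExec S j kwi kwr (Op.write x v) Resp.ok ∧
      ∀ j' v' kwi' kwr' : ℕ,
        opExec S j' kwi' kwr' (Op.write x v') Resp.ok → kwr' < ki → kwr' ≤ kwr)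
  ∨ (v = 0 ∧ ∀ j v' kwi kwr : ℕ, opExec S j kwi kwr (Op.write x v') Resp.ok → ¬ kwr < ki)

/-- A (sequential) history is legal if its restriction to every variable is in
the variable's sequential specification, i.e. every complete read is
consistent with the latest preceding write. -/
def isLegal (S : History) : Prop :=
  ∀ i x v ki kr : ℕ, opExec S i ki kr (Op.read x) (Resp.value v) → readsLegally S x v ki

/-- Transaction `i` has the pending (unanswered) invocation of `o` in `H`. -/
def pendingInv (H : History) (i : ℕ) (o : Op) : Prop :=
  (proj i H).getLast? = some (Event.inv i o)

/-- `C` is a completion `Compl(H)` of `H`. -/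
def isCompletion (H C : History) : Prop :=
  H <+: C ∧
  (∀ i : ℕ, inTxn C i → inTxn H i) ∧
  (∀ i : ℕ, inTxn C i → committed C i ∨ aborted C i) ∧
  ∀ i : ℕ, inTxn H i →
    ((committed H i ∨ aborted H i) → proj i C = proj i H) ∧
    (¬ committed H i → ¬ aborted H i →
      (pendingInv H i Op.tryCommit →
          proj i C = proj i H ++ [Event.res i Resp.committed]) ∧
      ((∃ o : Op, o ≠ Op.tryCommit ∧ pendingInv H i o) →
          proj i C = proj i H ++ [Event.res i Resp.aborted]) ∧
      ((¬ ∃ o : Op, pendingInv H i o) →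
          proj i C = proj i H ++ [Event.inv i Op.tryCommit, Event.res i Resp.aborted]))

/-- Restriction of a history to the events of a set of transactions. -/
noncomputable def restrictTxns (S : History) (T : Set ℕ) : History :=
  S.filter (fun e => decide (e.txn ∈ T))

/-- `Vis(S,T_i)`: the longest subhistory of `S` containing, for each `T_j` in
`S`, the events of `T_j` iff `j = i` or (`T_j` is committed and `T_j ≺_S T_i`). -/
noncomputable def Vis (S : History) (i : ℕ) : History :=
  restrictTxns S {j | j = i ∨ (committed S j ∧ rtPrec S j i)}

/-- `T_i` is legal in `S` if `Vis(S,T_i)` is legal. -/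
def legalIn (S : History) (i : ℕ) : Prop := isLegal (Vis S i)

/-- Serializability. -/
def serializable (H : History) : Prop :=
  ∃ C S : History, isCompletion H C ∧ sequential S ∧ equivH S C ∧
    ∀ i : ℕ, inTxn S i → committed S i → legalIn S i

/-- The read invoked at position `ki` by `T_j` on `x` is non-local: no write
to `x` by `T_j` precedes it. -/
def nonLocalReadAt (H : History) (j x ki : ℕ) : Prop :=
  ∀ m v : ℕ, m < ki → H[m]? ≠ some (Event.inv j (Op.write x v))

/-- `T_i` releases variable `x` early in `H`. -/
def releasesEarly (H : History) (i x : ℕ) : Prop :=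
  ∃ P : History, P <+: H ∧ live P i ∧
    ∃ j v wki wkr rki rkr : ℕ, j ≠ i ∧
      opExec P i wki wkr (Op.write x v) Resp.ok ∧
      opExec P j rki rkr (Op.read x) (Resp.value v) ∧
      nonLocalReadAt P j x rki ∧
      wkr < rki

/-- Overwriting by `T_i` observed by `T_j` on variable `x` in `H`. -/
def overwriting (H : History) (i j x : ℕ) : Prop :=
  i ≠ j ∧ releasesEarly H i x ∧
  ∃ v v' k1i k1r k2i k2r kri krr : ℕ,
    opExec H i k1i k1r (Op.write x v) Resp.ok ∧
    opExec H i k2i k2r (Op.write x v') Resp.ok ∧ k1r < k2i ∧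
    opExec H j kri krr (Op.read x) (Resp.value v) ∧ krr < k2i

/-- Final-state opacity. -/
def finalStateOpaque (H : History) : Prop :=
  ∃ C S : History, isCompletion H C ∧ sequential S ∧ equivH S C ∧ preservesRT H S ∧
    ∀ i : ℕ, inTxn S i → legalIn S i

/-- Opacity: every finite prefix is final-state opaque. -/
def isOpaque (H : History) : Prop := ∀ P : History, P <+: H → finalStateOpaque P

/-- Causal past of `T_i` in `H`: `T_i` together with the committed or aborted
transactions that precede `T_i` in `H`. -/
def causalPast (H : History) (i : ℕ) : Set ℕ :=
  {j | j = i ∨ ((committed H j ∨ aborted H j) ∧ rtPrec H j i)}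

/-- Virtual world consistency. -/
def VWC (H : History) : Prop :=
  (∃ S : History, sequential S ∧ equivH S (restrictTxns H {j | committed H j}) ∧
      preservesRT H S ∧ ∀ j : ℕ, inTxn S j → committed S j → legalIn S j) ∧
  (∀ i : ℕ, inTxn H i → aborted H i →
      ∃ S : History, sequential S ∧ equivH S (restrictTxns H (causalPast H i)) ∧ isLegal S)

/-! ### Live opacity -/

/-- Index `k` of `L` carries (part of) a read operation execution. -/
def isReadIdx (L : History) (k : ℕ) : Prop :=
  (∃ t x : ℕ, L[k]? = some (Event.inv t (Op.read x))) ∨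
  (1 ≤ k ∧ (∃ t x : ℕ, L[k-1]? = some (Event.inv t (Op.read x))) ∧
    ∃ (t : ℕ) (r : Resp), L[k]? = some (Event.res t r))

/-- Index `k` of `L` carries (part of) a non-local read operation execution. -/
def isNonLocalReadIdx (L : History) (k : ℕ) : Prop :=
  (∃ t x : ℕ, L[k]? = some (Event.inv t (Op.read x)) ∧
      ∀ m t' v : ℕ, m < k → L[m]? ≠ some (Event.inv t' (Op.write x v))) ∨
  (1 ≤ k ∧ (∃ (t : ℕ) (r : Resp), L[k]? = some (Event.res t r)) ∧
    ∃ t x : ℕ, L[k-1]? = some (Event.inv t (Op.read x)) ∧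
      ∀ m t' v : ℕ, m < k - 1 → L[m]? ≠ some (Event.inv t' (Op.write x v)))

/-- The subsequence of `L` of events at indices satisfying `p`. -/
noncomputable def seqOfIdx (L : History) (p : ℕ → Prop) : History :=
  ((List.range L.length).filter (fun k => decide (p k))).filterMap (fun k => L[k]?)

/-- `H|(T_i,r)`: the read operation executions of `T_i`, excluding the last
read if its response is `A_i`. -/
noncomputable def readSeq (H : History) (i : ℕ) : History :=
  let L := proj i H
  let R := seqOfIdx L (isReadIdx L)
  if R.getLast? = some (Event.res i Resp.aborted) then R.dropLast.dropLast else R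

/-- `H|(T_i,gr)`: the non-local read operation executions of `T_i`, excluding
the last read if its response is `A_i`. -/
noncomputable def grSeq (H : History) (i : ℕ) : History :=
  let L := proj i H
  let R := seqOfIdx L (isNonLocalReadIdx L)
  if R.getLast? = some (Event.res i Resp.aborted) then R.dropLast.dropLast else R

/-- The transaction `T_i^gr`. -/
noncomputable def grTxn (H : History) (i : ℕ) : History :=
  if grSeq H i = [] then []
  else [Event.inv i Op.init, Event.res i Resp.ok] ++ grSeq H i ++
       [Event.inv i Op.tryCommit, Event.res i Resp.committed]

/-- `S` justifies the serializability of `H`. -/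
def justifiesSer (S H : History) : Prop :=
  ∃ H' : History, List.Sublist H' H ∧ (∀ e ∈ H', committed H e.txn) ∧
    (∀ j : ℕ, committed H j → proj j H' = proj j H) ∧
    isLegal S ∧ equivH S H'

/-- All complete local reads of `T_i` in `H` have legal responses: the last
preceding write of `T_i` to the variable wrote the value read. -/
def localReadsLegal (H : History) (i : ℕ) : Prop :=
  ∀ x v ki kr : ℕ, opExec (proj i H) i ki kr (Op.read x) (Resp.value v) →
    (∃ m w : ℕ, m < ki ∧ (proj i H)[m]? = some (Event.inv i (Op.write x w))) →
    ∃ m : ℕ, m < ki ∧ (proj i H)[m]? = some (Event.inv i (Op.write x v)) ∧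
      ∀ m' w' : ℕ, m < m' → m' < ki → (proj i H)[m']? ≠ some (Event.inv i (Op.write x w'))

/-- Live opacity. -/
def liveOpaque (H : History) : Prop :=
  ∃ S : History, sequential S ∧ preservesRT H S ∧ justifiesSer S H ∧
    (∃ S' : History, sequential S' ∧ List.Sublist S S' ∧
      (∀ i : ℕ, inTxn H i → ¬ inTxn S i → proj i S' = grTxn H i) ∧
      (∀ i j : ℕ, rtPrec H i j → inTxn S' i → inTxn S' j → rtPrec S' i j) ∧
      isLegal S') ∧
    (∀ i : ℕ, inTxn H i → ¬ inTxn S i → localReadsLegal H i)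

/-! ### Last-use opacity -/

/-- A prefix-closed set of histories (the possible histories of a program). -/
def prefixClosed (E : Set History) : Prop :=
  ∀ H ∈ E, ∀ P : History, P <+: H → P ∈ E

/-- The write execution on `x` by `T_i` at positions `(ki,kr)` is the closing
("last") write on `x` by `T_i` in `H` with respect to the possible histories
`E`: in no extension of `H` in `E` does `T_i` invoke another write on `x`
after it. -/
def closingWrite (E : Set History) (H : History) (i x v ki kr : ℕ) : Prop :=
  opExec H i ki kr (Op.write x v) Resp.ok ∧
  ∀ H' ∈ E, H <+: H' → ∀ m v' : ℕ, H'[m]? = some (Event.inv i (Op.write x v')) → m ≤ ki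

/-- `T_i` decided on `x` in `H` (w.r.t. `E`). -/
def decidedOn (E : Set History) (H : History) (i x : ℕ) : Prop :=
  ∃ v ki kr : ℕ, closingWrite E H i x v ki kr

/-- The variable accessed by an operation. -/
def opVar : Op → Option ℕ
  | .read x => some x
  | .write x _ => some x
  | _ => none

/-- The variable accessed by the event at index `k` of `L` (for a response,
the variable of the matching invocation at `k-1`). -/
def eventVarAt (L : History) (k : ℕ) : Option ℕ :=
  match L[k]? with
  | some (Event.inv _ o) => opVar o
  | some (Event.res _ _) =>
      match L[k-1]? with
      | some (Event.inv _ o) => opVar o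
      | _ => none
  | none => none

/-- The operation execution starting at index `k` of `L` is complete. -/
def completeAt (L : History) (k : ℕ) : Prop :=
  ∀ (t : ℕ) (o : Op), L[k]? = some (Event.inv t o) →
    ∃ (t' : ℕ) (r : Resp), L[k+1]? = some (Event.res t' r)

/-- `Hs⌊T_i` (decided transaction subhistory): the subsequence of `Hs|T_i`
consisting of `init_i` and all complete operation executions on variables on
which `T_i` decided (decidedness judged in `Hd` w.r.t. `E`). -/
noncomputable def lastUseProj (E : Set History) (Hd Hs : History) (i : ℕ) : History :=
  let L := proj i Hs
  seqOfIdx L (fun k => completeAt L k ∧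
    (k ≤ 1 ∨ ∃ x : ℕ, eventVarAt L k = some x ∧ decidedOn E Hd i x))

/-- `Hs⌊^T_i = Hs⌊T_i · [tryC_i → C_i]`. -/
noncomputable def lastUseProjC (E : Set History) (Hd Hs : History) (i : ℕ) : History :=
  lastUseProj E Hd Hs i ++ [Event.inv i Op.tryCommit, Event.res i Resp.committed]

/-- Transactions of a history in order of first occurrence. -/
def txnOrder : History → List ℕ
  | [] => []
  | e :: t => e.txn :: (txnOrder t).filter (fun j => j ≠ e.txn)

/-- The candidate `LUVis(S,T_i)` determined by a choice `inc` of which decided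
non-committed transactions to include: for each transaction `j` of `S` in
order, all of `S|T_j` if `j = i` or `T_j` is committed in `S` and `T_j ≺_S T_i`;
`S⌊^T_j` if `T_j` is non-committed, decided on some variable in `H`,
`T_j ≺_S T_i`, not `T_j ≺_H T_i`, and `inc j` holds; nothing otherwise. -/
noncomputable def buildLUVis (E : Set History) (H S : History) (i : ℕ)
    (inc : ℕ → Prop) : History :=
  (txnOrder S).flatMap (fun j =>
    if j = i ∨ (committed S j ∧ rtPrec S j i) then proj j S
    else if ¬ committed S j ∧ (∃ x : ℕ, decidedOn E H j x) ∧ rtPrec S j i ∧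
        ¬ rtPrec H j i ∧ inc j
      then lastUseProjC E H S j
    else [])

/-- `T_i` is last-use legal in `S`: some admissible `LUVis(S,T_i)` is legal. -/
def lastUseLegal (E : Set History) (H S : History) (i : ℕ) : Prop :=
  ∃ inc : ℕ → Prop, isLegal (buildLUVis E H S i inc)

/-- Final-state last-use opacity with respect to `E`. -/
def finalStateLUOpaque (E : Set History) (H : History) : Prop :=
  ∃ C S : History, isCompletion H C ∧ sequential S ∧ equivH S C ∧ preservesRT H S ∧
    (∀ i : ℕ, inTxn S i → committed S i → legalIn S i) ∧
    (∀ i : ℕ, inTxn S i → ¬ committed S i → lastUseLegal E H S i)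

/-- Last-use opacity with respect to `E`: every finite prefix is final-state
last-use opaque with respect to `E`. -/
def lastUseOpaque (E : Set History) (H : History) : Prop :=
  ∀ P : History, P <+: H → finalStateLUOpaque E P

/-! ### Database conditions -/

/-- `T_j` reads from `T_i` in `H` (unique writes). -/
def readsFrom (H : History) (j i : ℕ) : Prop :=
  ∃ x v kwi kwr kri krr : ℕ,
    opExec H i kwi kwr (Op.write x v) Resp.ok ∧
    opExec H j kri krr (Op.read x) (Resp.value v)

/-- Recoverability: if `T_j` reads from `T_i` then `T_i` commits before `T_j`
commits. -/
def recoverable (H : History) : Prop :=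
  ∀ i j : ℕ, i ≠ j → readsFrom H j i →
    ∀ kc' : ℕ, H[kc']? = some (Event.res j Resp.committed) →
      ∃ kc : ℕ, kc < kc' ∧ H[kc]? = some (Event.res i Resp.committed)

/-- Avoiding cascading aborts: whenever `T_j` reads `x` from `T_i`, the commit
response `C_i` precedes the read. -/
def ACA (H : History) : Prop :=
  ∀ i j x v kwi kwr kri krr : ℕ, i ≠ j →
    opExec H i kwi kwr (Op.write x v) Resp.ok →
    opExec H j kri krr (Op.read x) (Resp.value v) →
    ∃ m : ℕ, m < kri ∧ H[m]? = some (Event.res i Resp.committed)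

/-- Strictness. -/
def strictH (H : History) : Prop :=
  ∀ i j : ℕ, i ≠ j → ∀ x v v' ki kr kwi kwr : ℕ,
    (opExec H i ki kr (Op.read x) (Resp.value v) ∨ opExec H i ki kr (Op.write x v') Resp.ok) →
    opExec H j kwi kwr (Op.write x v) Resp.ok →
    kwr < ki →
    ∃ m : ℕ, m < ki ∧
      (H[m]? = some (Event.res j Resp.committed) ∨ H[m]? = some (Event.res j Resp.aborted))

end TM

namespace TM

/-! ### Auxiliary material for Statement 0 -/

/-- The example history: `T_1` writes 1 to variable 0, then `T_2` reads 1 from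
variable 0 while `T_1` is still live. -/
def exH : History :=
  [Event.inv 1 Op.init, Event.res 1 Resp.ok,
   Event.inv 1 (Op.write 0 1), Event.res 1 Resp.ok,
   Event.inv 2 Op.init, Event.res 2 Resp.ok,
   Event.inv 2 (Op.read 0), Event.res 2 (Resp.value 1)]

/-- A completion of `exH`: both transactions try to commit and abort. -/
def exC : History := exH ++
  [Event.inv 1 Op.tryCommit, Event.res 1 Resp.aborted,
   Event.inv 2 Op.tryCommit, Event.res 2 Resp.aborted]

/-- A sequential history equivalent to `exC`. -/
def exS : History :=
  [Event.inv 1 Op.init, Event.res 1 Resp.ok,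
   Event.inv 1 (Op.write 0 1), Event.res 1 Resp.ok,
   Event.inv 1 Op.tryCommit, Event.res 1 Resp.aborted,
   Event.inv 2 Op.init, Event.res 2 Resp.ok,
   Event.inv 2 (Op.read 0), Event.res 2 (Resp.value 1),
   Event.inv 2 Op.tryCommit, Event.res 2 Resp.aborted]

lemma getElem?_lt_len {L : History} {k : ℕ} {e : Event} (h : L[k]? = some e) :
    k < L.length := by
  by_contra h'
  rw [List.getElem?_eq_none (by omega)] at h
  cases h

lemma proj_exH_other {i : ℕ} (h1 : i ≠ 1) (h2 : i ≠ 2) : proj i exH = [] := by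
  have e1 : (1 == i) = false := by simpa using Ne.symm h1
  have e2 : (2 == i) = false := by simpa using Ne.symm h2
  simp [proj, exH, Event.txn, List.filter, e1, e2]

lemma proj_exC_other {i : ℕ} (h1 : i ≠ 1) (h2 : i ≠ 2) : proj i exC = [] := by
  have e1 : (1 == i) = false := by simpa using Ne.symm h1
  have e2 : (2 == i) = false := by simpa using Ne.symm h2
  simp [proj, exC, exH, Event.txn, List.filter, e1, e2]

lemma proj_exS_other {i : ℕ} (h1 : i ≠ 1) (h2 : i ≠ 2) : proj i exS = [] := by
  have e1 : (1 == i) = false := by simpa using Ne.symm h1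
  have e2 : (2 == i) = false := by simpa using Ne.symm h2
  simp [proj, exS, Event.txn, List.filter, e1, e2]

lemma wf_nil (i : ℕ) : wellFormedTxn [] i := by
  refine ⟨?_, ?_, ?_, ?_⟩ <;> simp

lemma inTxn_12_exH {i : ℕ} (h : inTxn exH i) : i = 1 ∨ i = 2 := by
  by_contra hc
  push_neg at hc
  exact h (proj_exH_other hc.1 hc.2)

lemma inTxn_12_exC {i : ℕ} (h : inTxn exC i) : i = 1 ∨ i = 2 := by
  by_contra hc
  push_neg at hc
  exact h (proj_exC_other hc.1 hc.2)

lemma inTxn_12_exS {i : ℕ} (h : inTxn exS i) : i = 1 ∨ i = 2 := by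
  by_contra hc
  push_neg at hc
  exact h (proj_exS_other hc.1 hc.2)

lemma write_exH {k i x v : ℕ} (h : exH[k]? = some (Event.inv i (Op.write x v))) :
    k = 2 ∧ v = 1 := by
  have hb : k < exH.length := getElem?_lt_len h
  simp only [exH, List.length_cons, List.length_nil] at hb
  interval_cases k <;> simp [exH] at h
  omega

lemma rtPrec_exS_12 : rtPrec exS 1 2 := by
  refine ⟨5, 6, by omega, ⟨Event.res 1 Resp.aborted, by decide, rfl⟩,
    ⟨Event.inv 2 Op.init, by decide, rfl⟩, ?_, ?_⟩
  · intro m e hm ht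
    have hb : m < exS.length := getElem?_lt_len hm
    simp only [exS, List.length_cons, List.length_nil] at hb
    interval_cases m <;>
      first
        | omega
        | (simp only [exS, List.getElem?_cons_zero, List.getElem?_cons_succ,
            Option.some.injEq] at hm
           subst hm
           simp [Event.txn] at ht)
  · intro m e hm ht
    have hb : m < exS.length := getElem?_lt_len hm
    simp only [exS, List.length_cons, List.length_nil] at hb
    interval_cases m <;>
      first
        | omega
        | (simp only [exS, List.getElem?_cons_zero, List.getElem?_cons_succ,
            Option.some.injEq] at hm
           subst hm
           simp [Event.txn] at ht)

/-- Serializability supports early release: there exists a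
serializable (well-formed, unique-writes) history `H` and a transaction `T_i`
in `H` that releases some variable early in `H`. -/

theorem serializability_supports_early_release :
    ∃ (H : History) (i x : ℕ),
      wellFormed H ∧ uniqueWrites H ∧ serializable H ∧
      inTxn H i ∧ releasesEarly H i x := by
  refine ⟨exH, 1, 0, ?_, ?_, ?_, by unfold inTxn; decide, ?_⟩
  · -- well-formedness
    intro i
    rcases eq_or_ne i 1 with rfl | h1
    · refine ⟨?_, ?_, ?_, ?_⟩
      · intro k e h
        have hb : k < (proj 1 exH).length := getElem?_lt_len h
        have hp : proj 1 exH = [Event.inv 1 Op.init, Event.res 1 Resp.ok,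
            Event.inv 1 (Op.write 0 1), Event.res 1 Resp.ok] := by decide
        rw [hp] at h hb
        simp only [List.length_cons, List.length_nil] at hb
        interval_cases k <;> (try simp at h) <;> (try subst h) <;>
          simp [isInvEvent, isResEvent]
      · intro _; decide
      · intro k h
        have hb : k < (proj 1 exH).length := by
          rcases h with h | h <;> exact getElem?_lt_len h
        have hp : proj 1 exH = [Event.inv 1 Op.init, Event.res 1 Resp.ok,
            Event.inv 1 (Op.write 0 1), Event.res 1 Resp.ok] := by decide
        rw [hp] at h hb
        simp only [List.length_cons, List.length_nil] at hb
        interval_cases k <;> simp_all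
      · intro k o h ho m o' hm
        have hb : k < (proj 1 exH).length := getElem?_lt_len h
        have hp : proj 1 exH = [Event.inv 1 Op.init, Event.res 1 Resp.ok,
            Event.inv 1 (Op.write 0 1), Event.res 1 Resp.ok] := by decide
        rw [hp] at h hb
        simp only [List.length_cons, List.length_nil] at hb
        rcases ho with rfl | rfl <;> interval_cases k <;> simp_all
    rcases eq_or_ne i 2 with rfl | h2
    · refine ⟨?_, ?_, ?_, ?_⟩
      · intro k e h
        have hb : k < (proj 2 exH).length := getElem?_lt_len h
        have hp : proj 2 exH = [Event.inv 2 Op.init, Event.res 2 Resp.ok,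
            Event.inv 2 (Op.read 0), Event.res 2 (Resp.value 1)] := by decide
        rw [hp] at h hb
        simp only [List.length_cons, List.length_nil] at hb
        interval_cases k <;> (try simp at h) <;> (try subst h) <;>
          simp [isInvEvent, isResEvent]
      · intro _; decide
      · intro k h
        have hb : k < (proj 2 exH).length := by
          rcases h with h | h <;> exact getElem?_lt_len h
        have hp : proj 2 exH = [Event.inv 2 Op.init, Event.res 2 Resp.ok,
            Event.inv 2 (Op.read 0), Event.res 2 (Resp.value 1)] := by decide
        rw [hp] at h hb
        simp only [List.length_cons, List.length_nil] at hb
        interval_cases k <;> simp_all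
      · intro k o h ho m o' hm
        have hb : k < (proj 2 exH).length := getElem?_lt_len h
        have hp : proj 2 exH = [Event.inv 2 Op.init, Event.res 2 Resp.ok,
            Event.inv 2 (Op.read 0), Event.res 2 (Resp.value 1)] := by decide
        rw [hp] at h hb
        simp only [List.length_cons, List.length_nil] at hb
        rcases ho with rfl | rfl <;> interval_cases k <;> simp_all
    · rw [proj_exH_other h1 h2]; exact wf_nil i
  · -- unique writes
    intro k1 k2 i1 i2 x1 x2 v1 v2 h1 h2
    obtain ⟨hk1, hv1⟩ := write_exH h1
    obtain ⟨hk2, hv2⟩ := write_exH h2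
    omega
  · -- serializability
    refine ⟨exC, exS, ⟨⟨_, rfl⟩, ?_, ?_, ?_⟩, ?_, ?_, ?_⟩
    · intro i hi
      rcases inTxn_12_exC hi with rfl | rfl
      · unfold inTxn; decide
      · unfold inTxn; decide
    · intro i hi
      rcases inTxn_12_exC hi with rfl | rfl
      · exact Or.inr (by unfold aborted; decide)
      · exact Or.inr (by unfold aborted; decide)
    · intro i hi
      rcases inTxn_12_exH hi with rfl | rfl
      · refine ⟨?_, ?_⟩
        · rintro (h | h)
          · exact absurd h (by unfold committed; decide)
          · exact absurd h (by unfold aborted; decide)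
        · intro _ _
          refine ⟨fun hp => absurd hp (by unfold pendingInv; decide), ?_,
            fun _ => by decide⟩
          rintro ⟨o, ho, hp⟩
          unfold pendingInv at hp
          have : (proj 1 exH).getLast? = some (Event.res 1 Resp.ok) := by decide
          rw [this] at hp
          exact Event.noConfusion (Option.some.inj hp)
      · refine ⟨?_, ?_⟩
        · rintro (h | h)
          · exact absurd h (by unfold committed; decide)
          · exact absurd h (by unfold aborted; decide)
        · intro _ _
          refine ⟨fun hp => absurd hp (by unfold pendingInv; decide), ?_,
            fun _ => by decide⟩
          rintro ⟨o, ho, hp⟩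
          unfold pendingInv at hp
          have : (proj 2 exH).getLast? = some (Event.res 2 (Resp.value 1)) := by decide
          rw [this] at hp
          exact Event.noConfusion (Option.some.inj hp)
    · -- sequential
      intro i j hi hj hne
      rcases inTxn_12_exS hi with rfl | rfl <;> rcases inTxn_12_exS hj with rfl | rfl
      · exact absurd rfl hne
      · exact Or.inl rtPrec_exS_12
      · exact Or.inr rtPrec_exS_12
      · exact absurd rfl hne
    · -- equivalence
      intro i
      rcases eq_or_ne i 1 with rfl | h1
      · decide
      rcases eq_or_ne i 2 with rfl | h2
      · decide
      · rw [proj_exS_other h1 h2, proj_exC_other h1 h2]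
    · -- committed transactions are legal (vacuous: none is committed)
      intro i hi hc
      exfalso
      rcases inTxn_12_exS hi with rfl | rfl
      · exact absurd hc (by unfold committed; decide)
      · exact absurd hc (by unfold committed; decide)
  · -- early release
    refine ⟨exH, List.prefix_refl _, by unfold live inTxn committed aborted commitPending; decide, 2, 1, 2, 3, 6, 7, by omega, ?_, ?_, ?_, by omega⟩
    · exact ⟨by omega, by decide, by decide, fun m e h1 h2 _ => absurd h1 (by omega)⟩
    · exact ⟨by omega, by decide, by decide, fun m e h1 h2 _ => absurd h1 (by omega)⟩
    · intro m v hm h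
      have hb : m < exH.length := getElem?_lt_len h
      simp only [exH, List.length_cons, List.length_nil] at hb
      interval_cases m <;> simp_all [exH]

end TM
end

section
/- Serializability supports aborting early release: there exists a serializable history H (with unique writes) containing a transaction T_i such that T_i releases some variable early in H and H|T_i contains the abort response A_i. -/
namespace TM


/-- Example history: T1 writes, T2 reads early, both abort. -/
def Hex : History :=
  [Event.inv 1 Op.init, Event.res 1 Resp.ok,
   Event.inv 1 (Op.write 0 1), Event.res 1 Resp.ok,
   Event.inv 2 Op.init, Event.res 2 Resp.ok,
   Event.inv 2 (Op.read 0), Event.res 2 (Resp.value 1),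
   Event.inv 1 Op.tryAbort, Event.res 1 Resp.aborted,
   Event.inv 2 Op.tryAbort, Event.res 2 Resp.aborted]

/-- Sequential version: all of T1, then all of T2. -/
def Sex : History :=
  [Event.inv 1 Op.init, Event.res 1 Resp.ok,
   Event.inv 1 (Op.write 0 1), Event.res 1 Resp.ok,
   Event.inv 1 Op.tryAbort, Event.res 1 Resp.aborted,
   Event.inv 2 Op.init, Event.res 2 Resp.ok,
   Event.inv 2 (Op.read 0), Event.res 2 (Resp.value 1),
   Event.inv 2 Op.tryAbort, Event.res 2 Resp.aborted]

def P1H : History :=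
  [Event.inv 1 Op.init, Event.res 1 Resp.ok,
   Event.inv 1 (Op.write 0 1), Event.res 1 Resp.ok,
   Event.inv 1 Op.tryAbort, Event.res 1 Resp.aborted]

def P2H : History :=
  [Event.inv 2 Op.init, Event.res 2 Resp.ok,
   Event.inv 2 (Op.read 0), Event.res 2 (Resp.value 1),
   Event.inv 2 Op.tryAbort, Event.res 2 Resp.aborted]

lemma proj1_Hex : proj 1 Hex = P1H := by decide
lemma proj2_Hex : proj 2 Hex = P2H := by decide
lemma proj1_Sex : proj 1 Sex = P1H := by decide
lemma proj2_Sex : proj 2 Sex = P2H := by decide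

lemma proj_Hex (i : ℕ) (h1 : i ≠ 1) (h2 : i ≠ 2) : proj i Hex = [] := by
  have e1 : (1 == i) = false := beq_eq_false_iff_ne.2 (Ne.symm h1)
  have e2 : (2 == i) = false := beq_eq_false_iff_ne.2 (Ne.symm h2)
  simp [proj, Hex, Event.txn, List.filter, e1, e2]

lemma proj_Sex (i : ℕ) (h1 : i ≠ 1) (h2 : i ≠ 2) : proj i Sex = [] := by
  have e1 : (1 == i) = false := beq_eq_false_iff_ne.2 (Ne.symm h1)
  have e2 : (2 == i) = false := beq_eq_false_iff_ne.2 (Ne.symm h2)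
  simp [proj, Sex, Event.txn, List.filter, e1, e2]

lemma inTxn_Hex {i : ℕ} (h : inTxn Hex i) : i = 1 ∨ i = 2 := by
  by_contra hc
  push_neg at hc
  exact h (proj_Hex i hc.1 hc.2)

lemma inTxn_Sex {i : ℕ} (h : inTxn Sex i) : i = 1 ∨ i = 2 := by
  by_contra hc
  push_neg at hc
  exact h (proj_Sex i hc.1 hc.2)

lemma not_committed_Sex (i : ℕ) : ¬ committed Sex i := by
  intro h
  have hm : Event.inv i Op.tryCommit ∈ proj i Sex := h.subset (by simp)
  have : Event.inv i Op.tryCommit ∈ Sex := List.mem_of_mem_filter hm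
  simp [Sex] at this

lemma aborted_Hex {i : ℕ} (h : inTxn Hex i) : aborted Hex i := by
  rcases inTxn_Hex h with rfl | rfl
  · rw [aborted, proj1_Hex]; decide
  · rw [aborted, proj2_Hex]; decide

lemma wf_P1H : wellFormedTxn P1H 1 := by
  refine ⟨?_, fun _ => rfl, ?_, ?_⟩
  · intro k e hk
    have hk6 : k < 6 := by
      by_contra h
      rw [List.getElem?_eq_none (by simp [P1H]; omega)] at hk
      exact nomatch hk
    interval_cases k <;> simp [P1H] at hk <;> subst hk <;>
      simp [isInvEvent, isResEvent]
  · intro k hk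
    have hk6 : k < 6 := by
      by_contra h
      rw [List.getElem?_eq_none (by simp [P1H]; omega)] at hk
      simp at hk
    interval_cases k <;> simp [P1H] at hk ⊢
  · intro k o hk ho m o' hm
    have hk6 : k < 6 := by
      by_contra h
      rw [List.getElem?_eq_none (by simp [P1H]; omega)] at hk
      exact nomatch hk
    have hm6 : m < 6 := by
      by_contra h
      rw [List.getElem?_eq_none (by simp [P1H]; omega)] at hm
      exact nomatch hm
    interval_cases k <;> interval_cases m <;> simp_all [P1H] <;>
      first
      | omega
      | (subst hk; try subst hm; simp_all)

lemma wf_P2H : wellFormedTxn P2H 2 := by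
  refine ⟨?_, fun _ => rfl, ?_, ?_⟩
  · intro k e hk
    have hk6 : k < 6 := by
      by_contra h
      rw [List.getElem?_eq_none (by simp [P2H]; omega)] at hk
      exact nomatch hk
    interval_cases k <;> simp [P2H] at hk <;> subst hk <;>
      simp [isInvEvent, isResEvent]
  · intro k hk
    have hk6 : k < 6 := by
      by_contra h
      rw [List.getElem?_eq_none (by simp [P2H]; omega)] at hk
      simp at hk
    interval_cases k <;> simp [P2H] at hk ⊢
  · intro k o hk ho m o' hm
    have hk6 : k < 6 := by
      by_contra h
      rw [List.getElem?_eq_none (by simp [P2H]; omega)] at hk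
      exact nomatch hk
    have hm6 : m < 6 := by
      by_contra h
      rw [List.getElem?_eq_none (by simp [P2H]; omega)] at hm
      exact nomatch hm
    interval_cases k <;> interval_cases m <;> simp_all [P2H] <;>
      first
      | omega
      | (subst hk; try subst hm; simp_all)

lemma rtPrec_Sex : rtPrec Sex 1 2 := by
  refine ⟨5, 6, by omega, ⟨Event.res 1 Resp.aborted, rfl, rfl⟩,
    ⟨Event.inv 2 Op.init, rfl, rfl⟩, ?_, ?_⟩
  · intro m e hm ht
    have hm12 : m < 12 := by
      by_contra h
      rw [List.getElem?_eq_none (by simp [Sex]; omega)] at hm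
      exact nomatch hm
    interval_cases m <;> simp [Sex] at hm <;> subst hm <;>
      simp_all [Event.txn]
  · intro m e hm ht
    have hm12 : m < 12 := by
      by_contra h
      rw [List.getElem?_eq_none (by simp [Sex]; omega)] at hm
      exact nomatch hm
    interval_cases m <;> simp [Sex] at hm <;> subst hm <;>
      simp_all [Event.txn]


/-- Serializability supports aborting early release: there
exists a serializable (well-formed, unique-writes) history `H` containing a
transaction `T_i` that releases some variable early in `H` and whose
subhistory `H|T_i` contains the abort response `A_i`. -/
theorem serializability_supports_aborting_early_release :
    ∃ (H : History) (i x : ℕ),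
      wellFormed H ∧ uniqueWrites H ∧ serializable H ∧
      releasesEarly H i x ∧ Event.res i Resp.aborted ∈ proj i H := by
  refine ⟨Hex, 1, 0, ?_, ?_, ?_, ?_, ?_⟩
  · -- wellFormed
    intro i
    by_cases h1 : i = 1
    · subst h1; rw [proj1_Hex]; exact wf_P1H
    · by_cases h2 : i = 2
      · subst h2; rw [proj2_Hex]; exact wf_P2H
      · rw [proj_Hex i h1 h2]; exact wf_nil i
  · -- uniqueWrites
    intro k1 k2 i1 i2 x1 x2 v1 v2 h1 h2
    have hb : ∀ k i x v : ℕ, Hex[k]? = some (Event.inv i (Op.write x v)) →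
        k = 2 ∧ v = 1 := by
      intro k i x v hk
      have hk12 : k < 12 := by
        by_contra h
        rw [List.getElem?_eq_none (by simp [Hex]; omega)] at hk
        exact nomatch hk
      interval_cases k <;> simp [Hex] at hk <;> omega
    obtain ⟨hk1, hv1⟩ := hb _ _ _ _ h1
    obtain ⟨hk2, hv2⟩ := hb _ _ _ _ h2
    subst hk1 hv1
    exact ⟨one_ne_zero, fun h => absurd hk2.symm h⟩
  · -- serializable
    refine ⟨Hex, Sex, ?_, ?_, ?_, ?_⟩
    · -- isCompletion
      refine ⟨List.prefix_refl _, fun i h => h, fun i h => Or.inr (aborted_Hex h), ?_⟩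
      intro i hin
      refine ⟨fun _ => rfl, fun _ hna => absurd (aborted_Hex hin) hna⟩
    · -- sequential
      intro i j hi hj hne
      rcases inTxn_Sex hi with rfl | rfl <;> rcases inTxn_Sex hj with rfl | rfl
      · exact absurd rfl hne
      · exact Or.inl rtPrec_Sex
      · exact Or.inr rtPrec_Sex
      · exact absurd rfl hne
    · -- equivH
      intro i
      by_cases h1 : i = 1
      · subst h1; rw [proj1_Sex, proj1_Hex]
      · by_cases h2 : i = 2
        · subst h2; rw [proj2_Sex, proj2_Hex]
        · rw [proj_Sex i h1 h2, proj_Hex i h1 h2]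
    · intro i _ hcom
      exact absurd hcom (not_committed_Sex i)
  · -- releasesEarly
    refine ⟨Hex.take 8, List.take_prefix _ _, ?_,
      2, 1, 2, 3, 6, 7, by omega, ?_, ?_, ?_, by omega⟩
    · -- live
      refine ⟨by unfold inTxn; decide, ?_, by unfold aborted; decide,
        by unfold commitPending; decide⟩
      intro h
      have hm : Event.inv 1 Op.tryCommit ∈ proj 1 (Hex.take 8) := h.subset (by simp)
      have : Event.inv 1 Op.tryCommit ∈ Hex.take 8 := List.mem_of_mem_filter hm
      simp [Hex] at this
    · exact ⟨by omega, rfl, rfl, fun m e h1 h2 _ => absurd h2 (by omega)⟩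
    · exact ⟨by omega, rfl, rfl, fun m e h1 h2 _ => absurd h2 (by omega)⟩
    · -- nonLocalReadAt
      intro m v hm
      interval_cases m <;> simp [Hex]
  · rw [proj1_Hex]; decide

end TM
end

section
/- Opacity does not support early release: in every opaque history H (with unique writes), no transaction releases any variable early in H. -/
namespace TM

/-! ### Auxiliary lemmas -/

lemma getElem?_of_mem' {α : Type*} {l : List α} {a : α} (h : a ∈ l) :
    ∃ n : ℕ, l[n]? = some a := by
  obtain ⟨n, hn, h⟩ := List.mem_iff_getElem.mp h
  exact ⟨n, by rw [List.getElem?_eq_getElem hn, h]⟩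

lemma mem_of_getElem?' {α : Type*} {l : List α} {n : ℕ} {a : α} (h : l[n]? = some a) :
    a ∈ l := by
  obtain ⟨hn, h⟩ := List.getElem?_eq_some_iff.mp h
  exact h ▸ List.getElem_mem _

lemma getElem?_prefix {α : Type*} {l₁ l₂ : List α} (h : l₁ <+: l₂) {n : ℕ} {a : α}
    (hn : l₁[n]? = some a) : l₂[n]? = some a := by
  obtain ⟨t, rfl⟩ := h
  rw [List.getElem?_append]
  simp [(List.getElem?_eq_some_iff.mp hn).1, (List.getElem?_eq_some_iff.mp hn).2, hn]

lemma head_in_filter {p : Event → Bool} : ∀ {t : List Event} {k : ℕ} {b : Event},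
    t[k]? = some b → p b = true → (∀ n e, n < k → t[n]? = some e → p e = false) →
    (t.filter p)[0]? = some b := by
  intro t
  induction t with
  | nil => intro k b h; simp at h
  | cons c t ih =>
    intro k b h hpb hcond
    cases k with
    | zero =>
      simp only [List.getElem?_cons_zero, Option.some.injEq] at h
      subst h
      rw [List.filter_cons_of_pos hpb]
      simp
    | succ k' =>
      have hc : p c = false := hcond 0 c (Nat.succ_pos _) (by simp)
      rw [List.filter_cons_of_neg (by simp [hc])]
      exact ih (by simpa using h) hpb
        (fun n e hn he => hcond (n + 1) e (by omega) (by simpa using he))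

lemma consecutive_in_filter {p : Event → Bool} : ∀ (L : List Event) (ki kr : ℕ) {a b : Event},
    ki < kr → L[ki]? = some a → L[kr]? = some b → p a = true → p b = true →
    (∀ n e, ki < n → n < kr → L[n]? = some e → p e = false) →
    ∃ m, (L.filter p)[m]? = some a ∧ (L.filter p)[m + 1]? = some b := by
  intro L
  induction L with
  | nil => intro ki kr a b _ h; simp at h
  | cons c t ih =>
    intro ki kr a b hlt ha hb hpa hpb hmid
    obtain ⟨kr', rfl⟩ : ∃ kr', kr = kr' + 1 := ⟨kr - 1, by omega⟩
    rw [List.getElem?_cons_succ] at hb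
    cases ki with
    | zero =>
      simp only [List.getElem?_cons_zero, Option.some.injEq] at ha
      subst ha
      have hf0 : (t.filter p)[0]? = some b :=
        head_in_filter hb hpb
          (fun n e hn he => hmid (n + 1) e (by omega) (by omega) (by simpa using he))
      rw [List.filter_cons_of_pos hpa]
      exact ⟨0, by simp, by simpa using hf0⟩
    | succ ki' =>
      rw [List.getElem?_cons_succ] at ha
      have hmid' : ∀ n e, ki' < n → n < kr' → t[n]? = some e → p e = false :=
        fun n e h1 h2 he => hmid (n + 1) e (by omega) (by omega) (by simpa using he)
      obtain ⟨m, hm1, hm2⟩ := ih ki' kr' (by omega) ha hb hpa hpb hmid'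
      by_cases hc : p c
      · rw [List.filter_cons_of_pos hc]
        exact ⟨m + 1, by simpa using hm1, by simpa using hm2⟩
      · rw [List.filter_cons_of_neg hc]
        exact ⟨m, hm1, hm2⟩

lemma filter_head {p : Event → Bool} : ∀ {L : List Event} {b : Event},
    (L.filter p)[0]? = some b →
    ∃ k : ℕ, L[k]? = some b ∧ ∀ n e, n < k → L[n]? = some e → p e = false := by
  intro L
  induction L with
  | nil => intro b h; simp at h
  | cons c t ih =>
    intro b h
    by_cases hc : p c
    · rw [List.filter_cons_of_pos hc] at h
      simp only [List.getElem?_cons_zero, Option.some.injEq] at h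
      exact ⟨0, by simp [h], fun n e hn => by omega⟩
    · rw [List.filter_cons_of_neg hc] at h
      obtain ⟨k, hk, hcond⟩ := ih h
      refine ⟨k + 1, by simpa using hk, ?_⟩
      intro n e hn he
      cases n with
      | zero =>
        simp only [List.getElem?_cons_zero, Option.some.injEq] at he
        subst he
        simpa using hc
      | succ n' => exact hcond n' e (by omega) (by simpa using he)

lemma filter_consecutive {p : Event → Bool} : ∀ (L : List Event) (m : ℕ) {a b : Event},
    (L.filter p)[m]? = some a → (L.filter p)[m + 1]? = some b →
    ∃ ki kr : ℕ, ki < kr ∧ L[ki]? = some a ∧ L[kr]? = some b ∧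
      ∀ n e, ki < n → n < kr → L[n]? = some e → p e = false := by
  intro L
  induction L with
  | nil => intro m a b h; simp at h
  | cons c t ih =>
    intro m a b ha hb
    by_cases hc : p c
    · rw [List.filter_cons_of_pos hc] at ha hb
      cases m with
      | zero =>
        simp only [List.getElem?_cons_zero, Option.some.injEq] at ha
        subst ha
        rw [List.getElem?_cons_succ] at hb
        obtain ⟨k, hk, hcond⟩ := filter_head hb
        refine ⟨0, k + 1, Nat.succ_pos _, by simp, by simpa using hk, ?_⟩
        intro n e h1 h2 h3
        cases n with
        | zero => omega
        | succ n' => exact hcond n' e (by omega) (by simpa using h3)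
      | succ m' =>
        rw [List.getElem?_cons_succ] at ha hb
        obtain ⟨ki, kr, h1, h2, h3, h4⟩ := ih m' ha hb
        refine ⟨ki + 1, kr + 1, by omega, by simpa using h2, by simpa using h3, ?_⟩
        intro n e hn1 hn2 hne
        cases n with
        | zero => omega
        | succ n' => exact h4 n' e (by omega) (by omega) (by simpa using hne)
    · rw [List.filter_cons_of_neg hc] at ha hb
      obtain ⟨ki, kr, h1, h2, h3, h4⟩ := ih m ha hb
      refine ⟨ki + 1, kr + 1, by omega, by simpa using h2, by simpa using h3, ?_⟩
      intro n e hn1 hn2 hne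
      cases n with
      | zero =>
        simp only [List.getElem?_cons_zero, Option.some.injEq] at hne
        subst hne
        simpa using hc
      | succ n' => exact h4 n' e (by omega) (by omega) (by simpa using hne)

lemma pair_of_opExec {L : History} {t ki kr : ℕ} {o : Op} {r : Resp}
    (h : opExec L t ki kr o r) :
    ∃ m, (proj t L)[m]? = some (Event.inv t o) ∧
      (proj t L)[m + 1]? = some (Event.res t r) := by
  obtain ⟨h1, h2, h3, h4⟩ := h
  exact consecutive_in_filter L ki kr h1 h2 h3 (by simp [Event.txn]) (by simp [Event.txn])
    (fun n e hn1 hn2 he => by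
      have := h4 n e hn1 hn2 he
      simpa using this)

lemma opExec_of_pair {L : History} {t m : ℕ} {o : Op} {r : Resp}
    (h1 : (proj t L)[m]? = some (Event.inv t o))
    (h2 : (proj t L)[m + 1]? = some (Event.res t r)) :
    ∃ ki kr, opExec L t ki kr o r := by
  obtain ⟨ki, kr, hlt, ha, hb, hmid⟩ := filter_consecutive L m h1 h2
  exact ⟨ki, kr, hlt, ha, hb, fun n e hn1 hn2 he => by
    have := hmid n e hn1 hn2 he
    simpa using this⟩

lemma proj_Vis (S : History) (j : ℕ) : proj j (Vis S j) = proj j S := by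
  unfold Vis restrictTxns proj
  rw [List.filter_filter]
  apply List.filter_congr
  intro e _
  by_cases h : e.txn = j
  · simp [h]
  · simp [h]

lemma mem_proj {L : History} {e : Event} {t : ℕ} (hl : e ∈ L) (ht : e.txn = t) :
    e ∈ proj t L :=
  List.mem_filter.mpr ⟨hl, by simp [ht]⟩

lemma completion_proj_ext {P C : History} (h : isCompletion P C) (t : ℕ) (ht : inTxn P t) :
    ∃ ext, proj t C = proj t P ++ ext ∧
      ∀ e ∈ ext, e = Event.inv t Op.tryCommit ∨ e = Event.res t Resp.committed ∨
        e = Event.res t Resp.aborted := by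
  obtain ⟨-, -, -, h4⟩ := h
  by_cases hca : committed P t ∨ aborted P t
  · exact ⟨[], by simp [(h4 t ht).1 hca], by simp⟩
  · push_neg at hca
    have hcl := (h4 t ht).2 hca.1 hca.2
    by_cases hp : ∃ o, pendingInv P t o
    · obtain ⟨o, ho⟩ := hp
      by_cases hoc : o = Op.tryCommit
      · subst hoc
        exact ⟨[Event.res t Resp.committed], hcl.1 ho, by simp⟩
      · exact ⟨[Event.res t Resp.aborted], hcl.2.1 ⟨o, hoc, ho⟩, by simp⟩
    · exact ⟨[Event.inv t Op.tryCommit, Event.res t Resp.aborted], hcl.2.2 hp, by simp⟩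

/-- Opacity does not support early release: in every opaque
(well-formed, unique-writes) history `H`, no transaction releases any
variable early in `H`. -/
theorem opacity_does_not_support_early_release :
    ∀ H : History, wellFormed H → uniqueWrites H → isOpaque H →
      ∀ i x : ℕ, ¬ releasesEarly H i x := by
  intro H hwf huw hop i x hre
  obtain ⟨P, hP, hlive, j, v, wki, wkr, rki, rkr, hji, hw, hr, hnl, hwr⟩ := hre
  obtain ⟨C, S, hcomp, hseq, hequiv, hrtp, hlegal⟩ := hop P hP
  -- the write, at the level of `H`
  have hHw : H[wki]? = some (Event.inv i (Op.write x v)) := getElem?_prefix hP hw.2.1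
  have hv0 : v ≠ 0 := (huw wki wki i i x x v v hHw hHw).1
  -- `T_i` and `T_j` are in `P`
  have hmemw : Event.inv i (Op.write x v) ∈ P := mem_of_getElem?' hw.2.1
  have hinPi : inTxn P i :=
    List.ne_nil_of_mem (mem_proj hmemw (by simp [Event.txn]))
  have hinPj : inTxn P j :=
    List.ne_nil_of_mem (mem_proj (mem_of_getElem?' hr.2.1) (by simp [Event.txn]))
  -- structure of `proj i C`: `proj i P ++ ext` with no `C_i` in `ext`
  have hexti : ∃ ext, proj i C = proj i P ++ ext ∧
      Event.res i Resp.committed ∉ ext := by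
    obtain ⟨-, -, -, h4⟩ := hcomp
    have hcl := (h4 i hinPi).2 hlive.2.1 hlive.2.2.1
    by_cases hp : ∃ o, pendingInv P i o
    · obtain ⟨o, ho⟩ := hp
      by_cases hoc : o = Op.tryCommit
      · -- impossible: `T_i` would be commit-pending in `P`
        exfalso
        subst hoc
        have hinvmem : Event.inv i Op.tryCommit ∈ proj i P := by
          have := ho
          unfold pendingInv at this
          rw [List.getLast?_eq_getElem?] at this
          exact mem_of_getElem?' this
        have hCnot : Event.res i Resp.committed ∉ proj i P := by
          intro hmem
          obtain ⟨k, hk⟩ := getElem?_of_mem' hmem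
          have hkH : (proj i H)[k]? = some (Event.res i Resp.committed) :=
            getElem?_prefix (hP.filter _) hk
          have hlen : (proj i H).length = k + 1 := (hwf i).2.2.1 k (Or.inl hkH)
          have hklt : k < (proj i P).length := (List.getElem?_eq_some_iff.mp hk).1
          have hle : (proj i P).length ≤ (proj i H).length := (hP.filter _).length_le
          have hlenP : (proj i P).length = k + 1 := by omega
          have : (proj i P).getLast? = some (Event.res i Resp.committed) := by
            rw [List.getLast?_eq_getElem?, hlenP]
            simpa using hk
          rw [ho] at this
          simp at this
        exact hlive.2.2.2 ⟨hinvmem, hCnot, hlive.2.2.1⟩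
      · exact ⟨[Event.res i Resp.aborted], hcl.2.1 ⟨o, hoc, ho⟩, by simp⟩
    · exact ⟨[Event.inv i Op.tryCommit, Event.res i Resp.aborted], hcl.2.2 hp, by simp⟩
  obtain ⟨ext, hCeq, hnoC⟩ := hexti
  -- `T_i` is not committed in `C` (nor in `S`)
  have hNC : ¬ committed C i := by
    intro hc
    unfold committed at hc
    rw [hCeq] at hc
    rcases List.sublist_append_iff.mp hc with ⟨l1, l2, heq, hs1, hs2⟩
    rcases l1 with - | ⟨a, - | ⟨b, - | ⟨c', l⟩⟩⟩
    · simp only [List.nil_append] at heq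
      exact hnoC (hs2.subset (by rw [← heq]; simp))
    · simp only [List.cons_append, List.nil_append, List.cons.injEq] at heq
      exact hnoC (hs2.subset (by rw [← heq.2]; simp))
    · simp only [List.cons_append, List.nil_append, List.cons.injEq] at heq
      obtain ⟨ha, hb, hl2⟩ := heq
      subst ha hb
      have : l2 = [] := by simpa using hl2.symm
      subst this
      exact hlive.2.1 (by simpa [committed] using hs1)
    · simp at heq
  have hNCS : ¬ committed S i := by
    intro hc
    unfold committed at hc
    rw [hequiv i] at hc
    exact hNC hc
  -- transport the read of `T_j` into `Vis S j`
  obtain ⟨m, hm1, hm2⟩ := pair_of_opExec hr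
  have hPC : proj j P <+: proj j C := hcomp.1.filter _
  have hv1 : (proj j (Vis S j))[m]? = some (Event.inv j (Op.read x)) := by
    rw [proj_Vis, hequiv j]
    exact getElem?_prefix hPC hm1
  have hv2 : (proj j (Vis S j))[m + 1]? = some (Event.res j (Resp.value v)) := by
    rw [proj_Vis, hequiv j]
    exact getElem?_prefix hPC hm2
  obtain ⟨ki, kr, hreadV⟩ := opExec_of_pair hv1 hv2
  -- `T_j` is in `S` and legal there
  have hinSj : inTxn S j := by
    unfold inTxn
    rw [hequiv j]
    intro hnil
    have := getElem?_prefix hPC hm1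
    rw [hnil] at this
    simp at this
  have hlegj := hlegal j hinSj j x v ki kr hreadV
  -- the read must see a write of `v` inside `Vis S j`
  rcases hlegj with ⟨j', kwi', kwr', hlt', hwop, -⟩ | ⟨hv, -⟩
  · -- the writing event is in `Vis S j`
    have hmemV : Event.inv j' (Op.write x v) ∈ Vis S j := mem_of_getElem?' hwop.2.1
    have hmemS : Event.inv j' (Op.write x v) ∈ S := (List.mem_filter.mp hmemV).1
    have hcond := (List.mem_filter.mp hmemV).2
    -- the writer must be `T_i`, by unique writes
    have hj'i : j' = i := by
      have hmemC : Event.inv j' (Op.write x v) ∈ proj j' C := by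
        rw [← hequiv j']
        exact mem_proj hmemS (by simp [Event.txn])
      have hinPj' : inTxn P j' := by
        have hinCj' : inTxn C j' := List.ne_nil_of_mem hmemC
        exact hcomp.2.1 j' hinCj'
      obtain ⟨ext', hext', hprop'⟩ := completion_proj_ext hcomp j' hinPj'
      rw [hext'] at hmemC
      have hmemP : Event.inv j' (Op.write x v) ∈ proj j' P := by
        rcases List.mem_append.mp hmemC with h | h
        · exact h
        · rcases hprop' _ h with h' | h' | h' <;> simp at h'
      have hmemP' : Event.inv j' (Op.write x v) ∈ P := (List.mem_filter.mp hmemP).1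
      have hmemH : Event.inv j' (Op.write x v) ∈ H := hP.subset hmemP'
      obtain ⟨n, hn⟩ := getElem?_of_mem' hmemH
      have huwn := huw n wki j' i x x v v hn hHw
      have hnw : n = wki := by
        by_contra hne
        exact huwn.2 hne rfl
      subst hnw
      rw [hn] at hHw
      simpa using hHw
    subst hj'i
    -- but `T_i` is not visible to `T_j`
    simp only [Set.mem_setOf_eq, decide_eq_true_eq] at hcond
    rcases hcond with h | h
    · rw [Event.txn] at h
      exact hji h.symm
    · rw [Event.txn] at h
      exact hNCS h.1
  · exact hv0 hv


end TM
end
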